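/- Fix z ∈ ℂ* and η ∈ ℂ. There exist real constants k > 0 and C > 0 such that for all t ∈ ℂ* with Re(t/z) > 0 and |t| ≥ C, and with z/(2πit) + η not a nonpositive integer, one has |t|^{−k} ≤ |Λ(z/(2πit), η)| ≤ |t|^{k}. (This is the bounded growth condition at t = ∞ satisfied by the solution of the quantum Riemann-Hilbert problem for the doubled A₁ refined BPS structure.) -/

import Mathlib

/-- The modified gamma function (with `ω = 1`):
`Λ(w,η) = Γ(w+η) · exp(w) / (√(2π) · exp((η + w − 1/2)·Log w))`,
where `Log` is the principal branch of the logarithm. -/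
noncomputable def Lambda (w η : ℂ) : ℂ :=
  Complex.Gamma (w + η) * Complex.exp w /
    ((Real.sqrt (2 * Real.pi) : ℂ) * Complex.exp ((η + w - 1 / 2) * Complex.log w))


lemma gamma_near (s₀ : ℂ) (h : ∀ m : ℕ, s₀ ≠ -m) :
    ∃ δ : ℝ, 0 < δ ∧ ∀ s : ℂ, ‖s - s₀‖ ≤ δ →
      ‖Complex.Gamma s₀‖ / 2 ≤ ‖Complex.Gamma s‖ ∧
        ‖Complex.Gamma s‖ ≤ 2 * ‖Complex.Gamma s₀‖ := by
  have hg : Complex.Gamma s₀ ≠ 0 := Complex.Gamma_ne_zero h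
  have hgp : 0 < ‖Complex.Gamma s₀‖ := norm_pos_iff.mpr hg
  have hc : ContinuousAt Complex.Gamma s₀ :=
    (Complex.differentiableAt_Gamma s₀ h).continuousAt
  rw [Metric.continuousAt_iff] at hc
  obtain ⟨δ, hδ, hd⟩ := hc (‖Complex.Gamma s₀‖ / 2) (by positivity)
  refine ⟨δ / 2, by positivity, fun s hs => ?_⟩
  have h2 : dist s s₀ < δ := by
    rw [dist_eq_norm]; linarith
  have h3 := hd h2
  rw [dist_eq_norm] at h3
  have h4 : ‖Complex.Gamma s‖ - ‖Complex.Gamma s₀‖ ≤ ‖Complex.Gamma s₀‖ / 2 ∧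
      ‖Complex.Gamma s₀‖ - ‖Complex.Gamma s‖ ≤ ‖Complex.Gamma s₀‖ / 2 := by
    constructor
    · calc ‖Complex.Gamma s‖ - ‖Complex.Gamma s₀‖ ≤ ‖Complex.Gamma s - Complex.Gamma s₀‖ :=
        norm_sub_norm_le _ _
      _ ≤ _ := h3.le
    · calc ‖Complex.Gamma s₀‖ - ‖Complex.Gamma s‖ ≤ ‖Complex.Gamma s₀ - Complex.Gamma s‖ :=
        norm_sub_norm_le _ _
      _ = ‖Complex.Gamma s - Complex.Gamma s₀‖ := norm_sub_rev _ _
      _ ≤ _ := h3.le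
  constructor <;> linarith [h4.1, h4.2]

lemma gamma_pole_bound (m : ℕ) :
    ∃ δ K : ℝ, 0 < δ ∧ δ ≤ 1/2 ∧ 1 ≤ K ∧ ∀ w : ℂ, w ≠ 0 → ‖w‖ ≤ δ →
      ‖w‖ / K ≤ ‖Complex.Gamma (w - m)‖ ∧ ‖Complex.Gamma (w - m)‖ ≤ K / ‖w‖ := by
  obtain ⟨δ₀, hδ₀, hb⟩ := gamma_near 1 (by
    intro n
    intro h
    have : (1:ℂ).re = (-(n:ℂ)).re := by rw [h]
    simp at this
    linarith [Nat.cast_nonneg (α := ℝ) n])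
  set δ := min δ₀ (1/2) with hδdef
  have hδp : 0 < δ := lt_min hδ₀ (by norm_num)
  have hδh : δ ≤ 1/2 := min_le_right _ _
  suffices h : ∃ K : ℝ, 1 ≤ K ∧ ∀ w : ℂ, w ≠ 0 → ‖w‖ ≤ δ →
      ‖w‖ / K ≤ ‖Complex.Gamma (w - m)‖ ∧ ‖Complex.Gamma (w - m)‖ ≤ K / ‖w‖ by
    obtain ⟨K, hK, hh⟩ := h
    exact ⟨δ, K, hδp, hδh, hK, hh⟩
  induction m with
  | zero =>
    refine ⟨2, by norm_num, fun w hw hwδ => ?_⟩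
    have hwp : 0 < ‖w‖ := norm_pos_iff.mpr hw
    have hw1 : ‖w‖ ≤ 1/2 := hwδ.trans hδh
    have hG : Complex.Gamma (w + 1) = w * Complex.Gamma w := Complex.Gamma_add_one w hw
    have hb1 := hb (w + 1) (by simpa using hwδ.trans (min_le_left _ _))
    rw [Complex.Gamma_one, norm_one] at hb1
    have hn : ‖Complex.Gamma (w + 1)‖ = ‖w‖ * ‖Complex.Gamma w‖ := by
      rw [hG, norm_mul]
    rw [hn] at hb1
    have hC : ‖Complex.Gamma (w - (0:ℕ))‖ = ‖Complex.Gamma w‖ := by norm_num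
    rw [hC]
    constructor
    · rw [div_le_iff₀ (by norm_num)]
      nlinarith [hb1.1]
    · rw [le_div_iff₀ hwp]
      nlinarith [hb1.2]
  | succ n ih =>
    obtain ⟨K, hK, hh⟩ := ih
    refine ⟨K * (n + 2), by nlinarith [Nat.cast_nonneg (α := ℝ) n], fun w hw hwδ => ?_⟩
    have hwp : 0 < ‖w‖ := norm_pos_iff.mpr hw
    have hw1 : ‖w‖ ≤ 1/2 := hwδ.trans hδh
    obtain ⟨h1, h2⟩ := hh w hw hwδ
    have hne : w - (n+1 : ℕ) ≠ 0 := by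
      intro hc
      have hw' : w = ((n:ℕ)+1 : ℂ) := by
        have := sub_eq_zero.mp hc
        simpa using this
      have : ‖w‖ = ((n:ℝ) + 1) := by
        rw [hw', show ((n:ℕ)+1 : ℂ) = ((n+1:ℕ) : ℂ) by push_cast; ring,
          Complex.norm_natCast]; push_cast; ring
      nlinarith [Nat.cast_nonneg (α := ℝ) n]
    have hstep : Complex.Gamma (w - n) = (w - (n+1:ℕ)) * Complex.Gamma (w - (n+1:ℕ)) := by
      have := Complex.Gamma_add_one (w - (n+1:ℕ)) hne
      rw [show w - (n+1:ℕ) + 1 = w - n by push_cast; ring] at this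
      exact this
    have hfac_lo : (n:ℝ) + 1/2 ≤ ‖w - (n+1:ℕ)‖ := by
      have : ‖((n+1:ℕ):ℂ)‖ - ‖w‖ ≤ ‖w - (n+1:ℕ)‖ := by
        rw [norm_sub_rev]
        exact norm_sub_norm_le _ _
      have hn1 : ‖((n+1:ℕ):ℂ)‖ = (n:ℝ) + 1 := by
        rw [Complex.norm_natCast]; push_cast; ring
      rw [hn1] at this
      linarith
    have hfac_hi : ‖w - (n+1:ℕ)‖ ≤ (n:ℝ) + 2 := by
      have : ‖w - (n+1:ℕ)‖ ≤ ‖w‖ + ‖((n+1:ℕ):ℂ)‖ := norm_sub_le _ _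
      have hn1 : ‖((n+1:ℕ):ℂ)‖ = (n:ℝ) + 1 := by
        rw [Complex.norm_natCast]; push_cast; ring
      rw [hn1] at this
      linarith
    have hGn : ‖Complex.Gamma (w - n)‖ = ‖w - (n+1:ℕ)‖ * ‖Complex.Gamma (w - (n+1:ℕ))‖ := by
      rw [hstep, norm_mul]
    have hfp : (0:ℝ) < (n:ℝ) + 1/2 := by positivity
    have hGpos : 0 ≤ ‖Complex.Gamma (w - (n+1:ℕ))‖ := norm_nonneg _
    constructor
    · -- lower
      rw [div_le_iff₀ (by positivity)]
      have : ‖w‖ / K ≤ ‖w - (n+1:ℕ)‖ * ‖Complex.Gamma (w - (n+1:ℕ))‖ := by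
        rw [← hGn]; exact h1
      rw [div_le_iff₀ (by linarith)] at this
      nlinarith [hfac_hi, hGpos]
    · -- upper
      rw [le_div_iff₀ hwp]
      have h2' : ‖w - (n+1:ℕ)‖ * ‖Complex.Gamma (w - (n+1:ℕ))‖ ≤ K / ‖w‖ := by
        rw [← hGn]; exact h2
      have key : ‖w - (n+1:ℕ)‖ * ‖Complex.Gamma (w-(n+1:ℕ))‖ * ‖w‖ ≤ K := by
        have := mul_le_mul_of_nonneg_right h2' hwp.le
        rwa [div_mul_cancel₀ _ (ne_of_gt hwp)] at this
      nlinarith [key, hfac_lo, mul_nonneg hGpos hwp.le, hK, Nat.cast_nonneg (α := ℝ) n,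
        mul_le_mul_of_nonneg_right hfac_lo (mul_nonneg hGpos hwp.le)]

lemma gamma_bound (η : ℂ) :
    ∃ δ K : ℝ, 0 < δ ∧ δ ≤ 1/2 ∧ 1 ≤ K ∧
      ∀ w : ℂ, w ≠ 0 → ‖w‖ ≤ δ → (∀ n : ℕ, w + η ≠ -n) →
        ‖w‖ / K ≤ ‖Complex.Gamma (w + η)‖ ∧ ‖Complex.Gamma (w + η)‖ ≤ K / ‖w‖ := by
  by_cases h : ∀ m : ℕ, η ≠ -m
  · obtain ⟨δ₁, hδ₁, hb⟩ := gamma_near η h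
    have hgp : 0 < ‖Complex.Gamma η‖ := norm_pos_iff.mpr (Complex.Gamma_ne_zero h)
    set g := ‖Complex.Gamma η‖
    refine ⟨min δ₁ (1/2), max 1 (max (2/g) (2*g)), lt_min hδ₁ (by norm_num),
      min_le_right _ _, le_max_left _ _, fun w hw hwδ _ => ?_⟩
    have hwp : 0 < ‖w‖ := norm_pos_iff.mpr hw
    have hw1 : ‖w‖ ≤ 1/2 := hwδ.trans (min_le_right _ _)
    have hb1 := hb (w + η) (by simpa using hwδ.trans (min_le_left _ _))
    set K := max 1 (max (2/g) (2*g)) with hKdef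
    have hK1 : (1:ℝ) ≤ K := le_max_left _ _
    have hK2 : 2/g ≤ K := le_trans (le_max_left _ _) (le_max_right _ _)
    have hK3 : 2*g ≤ K := le_trans (le_max_right _ _) (le_max_right _ _)
    constructor
    · calc ‖w‖ / K ≤ 1 / K := by
            rw [div_le_div_iff₀ (by linarith) (by linarith)]
            nlinarith
          _ ≤ g / 2 := by
            rw [div_le_div_iff₀ (by linarith) (by norm_num)]
            nlinarith [hK2, hgp, div_mul_cancel₀ (2:ℝ) (ne_of_gt hgp)]
          _ ≤ ‖Complex.Gamma (w + η)‖ := hb1.1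
    · calc ‖Complex.Gamma (w + η)‖ ≤ 2 * g := hb1.2
          _ ≤ K := hK3
          _ ≤ K / ‖w‖ := by
            rw [le_div_iff₀ hwp]
            nlinarith
  · push_neg at h
    obtain ⟨m, hm⟩ := h
    obtain ⟨δ, K, h1, h2, h3, h4⟩ := gamma_pole_bound m
    refine ⟨δ, K, h1, h2, h3, fun w hw hwδ _ => ?_⟩
    have : w + η = w - m := by rw [hm]; ring
    rw [this]
    exact h4 w hw hwδ

set_option maxHeartbeats 1000000 in
lemma lambda_bound (η : ℂ) :
    ∃ δ K B : ℝ, 0 < δ ∧ δ ≤ 1/2 ∧ 1 ≤ K ∧ 1 ≤ B ∧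
      ∀ w : ℂ, w ≠ 0 → ‖w‖ ≤ δ → (∀ n : ℕ, w + η ≠ -n) →
        ‖w‖ ^ B / K ≤ ‖Lambda w η‖ ∧ ‖Lambda w η‖ ≤ K / ‖w‖ ^ B := by
  obtain ⟨δ, K₁, hδp, hδh, hK₁, hgb⟩ := gamma_bound η
  set A : ℝ := ‖η‖ + 1 with hAdef
  have hA1 : 1 ≤ A := by have := norm_nonneg η; linarith
  have hApos : 0 < A := by linarith
  have hπ : (3:ℝ) < Real.pi := Real.pi_gt_three
  refine ⟨δ, 3 * K₁ * Real.exp (1 + A * Real.pi), A + 1, hδp, hδh, ?_, by linarith,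
    fun w hw hwδ hn => ?_⟩
  · have h1 : (1:ℝ) ≤ Real.exp (1 + A * Real.pi) := Real.one_le_exp (by nlinarith)
    nlinarith
  set K : ℝ := 3 * K₁ * Real.exp (1 + A * Real.pi) with hKdef
  set B : ℝ := A + 1 with hBdef
  set x : ℝ := ‖w‖ with hxdef
  have hx : 0 < x := norm_pos_iff.mpr hw
  have hx2 : x ≤ 1/2 := hwδ.trans hδh
  set L : ℝ := Real.log x with hLdef
  have hL : L ≤ 0 := Real.log_nonpos hx.le (by linarith)
  set v : ℂ := (η + w - 1/2) * Complex.log w with hvdef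
  -- norm of Lambda
  have hnorm : ‖Lambda w η‖ = ‖Complex.Gamma (w + η)‖ * Real.exp w.re /
      (Real.sqrt (2 * Real.pi) * Real.exp v.re) := by
    simp only [Lambda, hvdef, norm_div, norm_mul, Complex.norm_exp,
      Complex.norm_real, Real.norm_eq_abs, _root_.abs_of_nonneg (Real.sqrt_nonneg _)]
  -- bound on v.re
  have hlogw : ‖Complex.log w‖ ≤ -L + Real.pi := by
    have h1 : ‖Complex.log w‖ ≤ |(Complex.log w).re| + |(Complex.log w).im| := by
      exact Complex.norm_le_abs_re_add_abs_im _
    rw [Complex.log_re, Complex.log_im, ← hxdef, ← hLdef] at h1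
    have := Complex.abs_arg_le_pi w
    rw [abs_of_nonpos hL] at h1
    linarith
  have hcoef : ‖η + w - 1/2‖ ≤ A := by
    have h1 : ‖η + w - 1/2‖ ≤ ‖η + w‖ + ‖(1/2 : ℂ)‖ := norm_sub_le _ _
    have h2 : ‖η + w‖ ≤ ‖η‖ + x := norm_add_le _ _
    have h3 : ‖(1/2 : ℂ)‖ = 1/2 := by norm_num
    rw [h3] at h1
    linarith
  have hvre : |v.re| ≤ A * (Real.pi - L) := by
    have h1 : |v.re| ≤ ‖v‖ := by
      exact Complex.abs_re_le_norm _
    have h2 : ‖v‖ = ‖η + w - 1/2‖ * ‖Complex.log w‖ := norm_mul _ _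
    have h3 : ‖η + w - 1/2‖ * ‖Complex.log w‖ ≤ A * (-L + Real.pi) :=
      mul_le_mul hcoef hlogw (norm_nonneg _) (by linarith)
    calc |v.re| ≤ ‖v‖ := h1
      _ ≤ A * (-L + Real.pi) := by rw [h2]; exact h3
      _ = A * (Real.pi - L) := by ring
  -- rpow facts
  have hxA : x ^ A = Real.exp (L * A) := Real.rpow_def_of_pos hx A
  have hxApos : 0 < x ^ A := Real.rpow_pos_of_pos hx A
  have hxB : x ^ B = x ^ A * x := by
    rw [hBdef, Real.rpow_add hx, Real.rpow_one]
  -- exp v.re bounds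
  have he2hi : Real.exp v.re ≤ Real.exp (A * Real.pi) / x ^ A := by
    rw [hxA, ← Real.exp_sub]
    exact Real.exp_le_exp.mpr (by nlinarith [le_of_abs_le hvre])
  have he2lo : x ^ A / Real.exp (A * Real.pi) ≤ Real.exp v.re := by
    rw [hxA, ← Real.exp_sub]
    exact Real.exp_le_exp.mpr (by nlinarith [neg_abs_le v.re])
  -- sqrt bounds
  have hs1 : 1 ≤ Real.sqrt (2 * Real.pi) := Real.one_le_sqrt.mpr (by nlinarith)
  have hs3 : Real.sqrt (2 * Real.pi) ≤ 3 := by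
    rw [show (3:ℝ) = Real.sqrt 9 by
      rw [show (9:ℝ) = 3^2 by norm_num, Real.sqrt_sq (by norm_num)]]
    exact Real.sqrt_le_sqrt (by nlinarith [Real.pi_lt_d2])
  -- exp w.re bounds
  have hwre : |w.re| ≤ x := by
    rw [hxdef]; exact Complex.abs_re_le_norm w
  have he1hi : Real.exp w.re ≤ Real.exp 1 :=
    Real.exp_le_exp.mpr (by nlinarith [le_of_abs_le hwre])
  have he1lo : Real.exp (-1) ≤ Real.exp w.re :=
    Real.exp_le_exp.mpr (by nlinarith [neg_abs_le w.re])
  -- Gamma bounds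
  obtain ⟨hg1, hg2⟩ := hgb w hw hwδ hn
  have hK₁0 : K₁ ≠ 0 := by linarith
  have hexp1 : (0:ℝ) < Real.exp 1 := Real.exp_pos 1
  have hexpA : (0:ℝ) < Real.exp (A * Real.pi) := Real.exp_pos _
  rw [hnorm]
  constructor
  · -- lower bound
    have hlo : (x / K₁ * Real.exp (-1)) / (3 * (Real.exp (A * Real.pi) / x ^ A)) ≤
        ‖Complex.Gamma (w + η)‖ * Real.exp w.re /
          (Real.sqrt (2 * Real.pi) * Real.exp v.re) := by
      apply div_le_div₀ (by positivity)
        (mul_le_mul hg1 he1lo (Real.exp_pos _).le (norm_nonneg _))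
        (by positivity)
        (mul_le_mul hs3 he2hi (Real.exp_pos _).le (by norm_num))
    refine le_trans (le_of_eq ?_) hlo
    rw [hKdef, hxB, Real.exp_add, Real.exp_neg]
    field_simp
  · -- upper bound
    have hhi : ‖Complex.Gamma (w + η)‖ * Real.exp w.re /
        (Real.sqrt (2 * Real.pi) * Real.exp v.re) ≤
        (K₁ / x * Real.exp 1) / (1 * (x ^ A / Real.exp (A * Real.pi))) := by
      apply div_le_div₀ (by positivity)
        (mul_le_mul hg2 he1hi (Real.exp_pos _).le (by positivity))
        (by positivity)
        (mul_le_mul hs1 he2lo (by positivity) (by positivity))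
    refine hhi.trans ?_
    have heq : K₁ / x * Real.exp 1 / (1 * (x ^ A / Real.exp (A * Real.pi))) =
        K₁ * Real.exp 1 * Real.exp (A * Real.pi) / x ^ B := by
      rw [hxB]; field_simp
    rw [heq, hKdef, Real.exp_add]
    have hxBpos : 0 < x ^ B := Real.rpow_pos_of_pos hx B
    rw [div_le_div_iff_of_pos_right hxBpos]
    have hpe : 0 < Real.exp 1 * Real.exp (A * Real.pi) := by positivity
    nlinarith [mul_pos (show (0:ℝ) < K₁ by linarith) hpe]

/-- (Bounded growth at `t = ∞` for the solution of the quantum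
Riemann–Hilbert problem of the doubled A₁ refined BPS structure.)
Fix `z ∈ ℂ*` and `η ∈ ℂ`.  There exist real constants `k > 0` and `C > 0` such that for
all `t ∈ ℂ*` with `Re(t/z) > 0` and `|t| ≥ C`, and with `z/(2πit) + η` not a nonpositive
integer, one has `|t|^{−k} ≤ |Λ(z/(2πit), η)| ≤ |t|^k`. -/
theorem lambda_bounded_growth_at_infinity (z η : ℂ) (hz : z ≠ 0) :
    ∃ k : ℝ, 0 < k ∧ ∃ C : ℝ, 0 < C ∧
      ∀ t : ℂ, t ≠ 0 → 0 < (t / z).re → C ≤ ‖t‖ →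
        (∀ n : ℕ, z / (2 * Real.pi * Complex.I * t) + η ≠ -(n : ℂ)) →
          ‖t‖ ^ (-k) ≤ ‖Lambda (z / (2 * Real.pi * Complex.I * t)) η‖ ∧
            ‖Lambda (z / (2 * Real.pi * Complex.I * t)) η‖ ≤ ‖t‖ ^ k := by
  obtain ⟨δ, K, B, hδp, hδh, hK, hB, hbound⟩ := lambda_bound η
  set r : ℝ := ‖z‖ / (2 * Real.pi) with hrdef
  have hπ : (0:ℝ) < Real.pi := Real.pi_pos
  have hrpos : 0 < r := div_pos (norm_pos_iff.mpr hz) (by positivity)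
  refine ⟨B + 1, by linarith, max (max 1 (r / δ)) (K / r ^ B),
    lt_of_lt_of_le one_pos ((le_max_left 1 (r/δ)).trans (le_max_left _ _)),
    fun t ht0 _ htC hn => ?_⟩
  have htpos : 0 < ‖t‖ := norm_pos_iff.mpr ht0
  have ht1 : 1 ≤ ‖t‖ := le_trans ((le_max_left 1 (r/δ)).trans (le_max_left _ _)) htC
  have htδ : r / δ ≤ ‖t‖ := le_trans ((le_max_right 1 (r/δ)).trans (le_max_left _ _)) htC
  have htK : K / r ^ B ≤ ‖t‖ := le_trans (le_max_right _ _) htC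
  set w : ℂ := z / (2 * Real.pi * Complex.I * t) with hwdef
  have hden : (2 * (Real.pi:ℂ) * Complex.I * t) ≠ 0 := by
    apply mul_ne_zero (mul_ne_zero (mul_ne_zero two_ne_zero _) Complex.I_ne_zero) ht0
    exact Complex.ofReal_ne_zero.mpr (ne_of_gt hπ)
  have hw : w ≠ 0 := div_ne_zero hz hden
  have hwnorm : ‖w‖ = r / ‖t‖ := by
    rw [hwdef, norm_div]
    have hd : ‖2 * (Real.pi:ℂ) * Complex.I * t‖ = 2 * Real.pi * ‖t‖ := by
      simp [norm_mul, Complex.norm_I, Complex.norm_real,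
        _root_.abs_of_nonneg hπ.le]
    rw [hd, hrdef, div_div]
  have hwδ : ‖w‖ ≤ δ := by
    rw [hwnorm, div_le_iff₀ htpos]
    rw [div_le_iff₀ hδp] at htδ
    nlinarith
  obtain ⟨hlo, hhi⟩ := hbound w hw hwδ hn
  have hwB : ‖w‖ ^ B = r ^ B / ‖t‖ ^ B := by
    rw [hwnorm, Real.div_rpow hrpos.le (norm_nonneg t)]
  have htB : 0 < ‖t‖ ^ B := Real.rpow_pos_of_pos htpos B
  have hrB : 0 < r ^ B := Real.rpow_pos_of_pos hrpos B
  have htB1 : ‖t‖ ^ (B + 1) = ‖t‖ ^ B * ‖t‖ := by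
    rw [Real.rpow_add htpos, Real.rpow_one]
  have hKle : K ≤ ‖t‖ * r ^ B := by
    rw [div_le_iff₀ hrB] at htK; linarith
  constructor
  · -- lower bound
    rw [Real.rpow_neg (norm_nonneg t), htB1]
    refine le_trans ?_ hlo
    rw [hwB, div_div]
    rw [inv_eq_one_div, div_le_div_iff₀ (by positivity) (by positivity)]
    nlinarith [mul_le_mul_of_nonneg_right hKle htB.le]
  · -- upper bound
    refine hhi.trans ?_
    rw [hwB, htB1, div_div_eq_mul_div, div_le_iff₀ hrB]
    nlinarith [mul_le_mul_of_nonneg_right hKle htB.le]
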